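/- Every connected graph G with at least 2 vertices in which every vertex has degree exactly 2 (i.e., every cycle C_n, n ≥ 3) other than C5 is proper conflict-free 4-choosable: for every list assignment L with |L(v)| = 4 for all v, the cycle admits a proper conflict-free L-coloring. -/

import Mathlib

/-- A proper conflict-free coloring of `G`. -/
def IsPCF {V β : Type*} (G : SimpleGraph V) (φ : V → β) : Prop :=
  (∀ ⦃a b : V⦄, G.Adj a b → φ a ≠ φ b) ∧
  ∀ v : V, (∃ u, G.Adj v u) → ∃ c : β, ∃! u : V, G.Adj v u ∧ φ u = c


namespace PCFaux

noncomputable def pick (s : Finset ℕ) : ℕ := if h : s.Nonempty then s.min' h else 0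

lemma pick_mem {s : Finset ℕ} (h : s.Nonempty) : pick s ∈ s := by
  rw [pick, dif_pos h]; exact s.min'_mem h

lemma card3 (a b c : ℕ) : ({a, b, c} : Finset ℕ).card ≤ 3 := by
  apply le_trans (Finset.card_insert_le _ _)
  have := Finset.card_insert_le b ({c} : Finset ℕ)
  simp at *; omega

lemma pick3 {K : Finset ℕ} (h : 4 ≤ K.card) (a b c : ℕ) :
    pick (K \ {a, b, c}) ∈ K ∧ pick (K \ {a, b, c}) ≠ a ∧
      pick (K \ {a, b, c}) ≠ b ∧ pick (K \ {a, b, c}) ≠ c := by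
  have hne : (K \ {a, b, c}).Nonempty := by
    rw [← Finset.card_pos]
    have := Finset.card_le_card_sdiff_add_card (s := K) (t := {a, b, c})
    have := card3 a b c
    omega
  have := pick_mem hne
  simp only [Finset.mem_sdiff, Finset.mem_insert, Finset.mem_singleton] at this
  tauto

lemma pick2 {K : Finset ℕ} (h : 4 ≤ K.card) (a b : ℕ) :
    pick (K \ {a, b}) ∈ K ∧ pick (K \ {a, b}) ≠ a ∧ pick (K \ {a, b}) ≠ b := by
  have hne : (K \ {a, b}).Nonempty := by
    rw [← Finset.card_pos]
    have := Finset.card_le_card_sdiff_add_card (s := K) (t := {a, b})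
    have h2 : ({a, b} : Finset ℕ).card ≤ 2 :=
      le_trans (Finset.card_insert_le _ _) (by simp)
    omega
  have := pick_mem hne
  simp only [Finset.mem_sdiff, Finset.mem_insert, Finset.mem_singleton] at this
  tauto

noncomputable def chain (K : ℕ → Finset ℕ) (a : ℕ) : ℕ → ℕ
  | 0 => a
  | 1 => a
  | (i+2) => pick (K (i+2) \ {chain K a (i+1), chain K a i})

lemma chain_spec (K : ℕ → Finset ℕ) (a : ℕ) (i : ℕ) (h : 3 ≤ (K (i+2)).card) :
    chain K a (i+2) ∈ K (i+2) ∧ chain K a (i+2) ≠ chain K a (i+1) ∧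
      chain K a (i+2) ≠ chain K a i := by
  have hne : (K (i+2) \ {chain K a (i+1), chain K a i}).Nonempty := by
    rw [← Finset.card_pos]
    have h2 : ({chain K a (i+1), chain K a i} : Finset ℕ).card ≤ 2 :=
      le_trans (Finset.card_insert_le _ _) (by simp)
    have := Finset.card_le_card_sdiff_add_card (s := K (i+2))
      (t := {chain K a (i+1), chain K a i})
    omega
  have := pick_mem hne
  rw [show chain K a (i+2) = pick (K (i+2) \ {chain K a (i+1), chain K a i}) from rfl]
  simp only [Finset.mem_sdiff, Finset.mem_insert, Finset.mem_singleton] at this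
  tauto

/-- the conclusion of the cyclic list-colouring lemma -/
def Concl (n : ℕ) (K : ℕ → Finset ℕ) : Prop :=
  ∃ φ : ℕ → ℕ, (∀ i < n, φ i ∈ K i) ∧ (∀ i, i+1 < n → φ i ≠ φ (i+1)) ∧
    (∀ i, i+2 < n → φ i ≠ φ (i+2)) ∧ φ 0 ≠ φ (n-1) ∧ φ 0 ≠ φ (n-2) ∧ φ 1 ≠ φ (n-1)

lemma card_sdiff_c {K : Finset ℕ} (h : K.card = 4) (c : ℕ) : 3 ≤ (K \ {c}).card := by
  have h1 : ({c} : Finset ℕ).card ≤ 1 := by simp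
  have := Finset.card_le_card_sdiff_add_card (s := K) (t := {c})
  omega

/-- Pattern B : c ∈ K 1 \ K 0.  Colour 1 with c, chain 2..n-1 avoiding c, 0 last. -/
lemma patternB (m : ℕ) (K : ℕ → Finset ℕ) (hK : ∀ i < m + 6, (K i).card = 4)
    (c : ℕ) (hc1 : c ∈ K 1) (hc0 : c ∉ K 0) : Concl (m+6) K := by
  set K' : ℕ → Finset ℕ := fun i => K i \ {c} with hK'
  set g : ℕ → ℕ := chain K' c with hg
  have gspec : ∀ i, i + 2 < m + 6 → g (i+2) ∈ K (i+2) ∧ g (i+2) ≠ c ∧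
      g (i+2) ≠ g (i+1) ∧ g (i+2) ≠ g i := by
    intro i hi
    have h3 : 3 ≤ (K' (i+2)).card := card_sdiff_c (hK _ hi) c
    obtain ⟨h1, h2, h3'⟩ := chain_spec K' c i h3
    rw [hK'] at h1; simp only [Finset.mem_sdiff, Finset.mem_singleton] at h1
    exact ⟨h1.1, h1.2, h2, h3'⟩
  set p0 : ℕ := pick (K 0 \ {g 2, g (m+4), g (m+5)}) with hp0
  obtain ⟨p0K, p0a, p0b, p0c⟩ := pick3 (le_of_eq (hK 0 (by omega)).symm) (g 2) (g (m+4)) (g (m+5))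
  rw [← hp0] at p0K p0a p0b p0c
  refine ⟨fun i => if i = 0 then p0 else if i = 1 then c else g i, ?_, ?_, ?_, ?_, ?_, ?_⟩
  · intro i hi
    rcases Nat.lt_or_ge i 2 with h | h
    · interval_cases i <;> simp [p0K, hc1]
    · obtain ⟨j, rfl⟩ : ∃ j, i = j + 2 := ⟨i - 2, by omega⟩
      simp only [if_neg (by omega : j+2 ≠ 0), if_neg (by omega : j+2 ≠ 1)]
      exact (gspec j hi).1
  · intro i hi
    rcases Nat.lt_or_ge i 2 with h | h
    · interval_cases i
      · norm_num
        intro h; exact hc0 (h ▸ p0K)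
      · have := (gspec 0 (by omega)).2.1
        simpa using fun h => this h.symm
    · obtain ⟨j, rfl⟩ : ∃ j, i = j + 2 := ⟨i - 2, by omega⟩
      simp only [if_neg (by omega : j+2 ≠ 0), if_neg (by omega : j+2 ≠ 1),
        if_neg (by omega : j+3 ≠ 0), if_neg (by omega : j+3 ≠ 1)]
      have := (gspec (j+1) (by omega)).2.2.1
      exact this.symm
  · intro i hi
    rcases Nat.lt_or_ge i 2 with h | h
    · interval_cases i
      · simpa using p0a
      · have := (gspec 1 (by omega)).2.1
        simpa using fun h => this h.symm
    · obtain ⟨j, rfl⟩ : ∃ j, i = j + 2 := ⟨i - 2, by omega⟩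
      simp only [if_neg (by omega : j+2 ≠ 0), if_neg (by omega : j+2 ≠ 1),
        if_neg (by omega : j+4 ≠ 0), if_neg (by omega : j+4 ≠ 1)]
      have := (gspec (j+2) (by omega)).2.2.2
      exact this.symm
  · have : m + 6 - 1 = m + 5 := by omega
    rw [this]
    simpa [show m+5 ≠ 0 by omega, show m+5 ≠ 1 by omega] using p0c
  · have : m + 6 - 2 = m + 4 := by omega
    rw [this]
    simpa [show m+4 ≠ 0 by omega, show m+4 ≠ 1 by omega] using p0b
  · have : m + 6 - 1 = m + 5 := by omega
    rw [this]
    have := (gspec (m+3) (by omega)).2.1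
    simpa [show m+5 ≠ 0 by omega, show m+5 ≠ 1 by omega] using fun h => this h.symm

end PCFaux

namespace PCFaux

/-- Pattern D : c ∈ K 2 \ K 0. -/
lemma patternD (m : ℕ) (K : ℕ → Finset ℕ) (hK : ∀ i < m + 6, (K i).card = 4)
    (c : ℕ) (hc2 : c ∈ K 2) (hc0 : c ∉ K 0) : Concl (m+6) K := by
  set K' : ℕ → Finset ℕ := fun i => K (i+1) \ {c} with hK'
  set g : ℕ → ℕ := chain K' c with hg
  have gspec : ∀ i, i + 3 < m + 6 → g (i+2) ∈ K (i+3) ∧ g (i+2) ≠ c ∧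
      g (i+2) ≠ g (i+1) ∧ g (i+2) ≠ g i := by
    intro i hi
    have h3 : 3 ≤ (K' (i+2)).card := card_sdiff_c (hK (i+3) hi) c
    obtain ⟨h1, h2, h3'⟩ := chain_spec K' c i h3
    rw [hK'] at h1; simp only [Finset.mem_sdiff, Finset.mem_singleton] at h1
    exact ⟨h1.1, h1.2, h2, h3'⟩
  set p1 : ℕ := pick (K 1 \ {c, g 2, g (m+4)}) with hp1
  obtain ⟨p1K, p1a, p1b, p1c⟩ := pick3 (le_of_eq (hK 1 (by omega)).symm) c (g 2) (g (m+4))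
  rw [← hp1] at p1K p1a p1b p1c
  set p0 : ℕ := pick (K 0 \ {p1, g (m+4), g (m+3)}) with hp0
  obtain ⟨p0K, p0a, p0b, p0c⟩ := pick3 (le_of_eq (hK 0 (by omega)).symm) p1 (g (m+4)) (g (m+3))
  rw [← hp0] at p0K p0a p0b p0c
  refine ⟨fun i => match i with | 0 => p0 | 1 => p1 | 2 => c | (j+3) => g (j+2),
    ?_, ?_, ?_, ?_, ?_, ?_⟩
  · intro i hi
    match i, hi with
    | 0, _ => exact p0K
    | 1, _ => exact p1K
    | 2, _ => exact hc2
    | (j+3), hi => exact (gspec j hi).1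
  · intro i hi
    match i, hi with
    | 0, _ => exact p0a
    | 1, _ => exact p1a
    | 2, hi => exact ((gspec 0 hi).2.1).symm
    | (j+3), hi => exact ((gspec (j+1) hi).2.2.1).symm
  · intro i hi
    match i, hi with
    | 0, _ => exact fun h => hc0 ((show p0 = c from h) ▸ p0K)
    | 1, _ => exact p1b
    | 2, hi => exact ((gspec 1 hi).2.1).symm
    | (j+3), hi => exact ((gspec (j+2) hi).2.2.2).symm
  · show p0 ≠ g (m+4)
    exact p0b
  · show p0 ≠ g (m+3)
    exact p0c
  · show p1 ≠ g (m+4)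
    exact p1c

end PCFaux

namespace PCFaux

/-- Pattern A : c ∈ K 1 ∩ K (m+4); colour 1 and m+4 with c. -/
lemma patternA (m : ℕ) (K : ℕ → Finset ℕ) (hK : ∀ i < m + 6, (K i).card = 4)
    (c : ℕ) (hc1 : c ∈ K 1) (hc4 : c ∈ K (m+4)) : Concl (m+6) K := by
  set K' : ℕ → Finset ℕ := fun i => K i \ {c} with hK'
  set g : ℕ → ℕ := chain K' c with hg
  have gspec : ∀ i, i + 2 < m + 6 → g (i+2) ∈ K (i+2) ∧ g (i+2) ≠ c ∧
      g (i+2) ≠ g (i+1) ∧ g (i+2) ≠ g i := by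
    intro i hi
    have h3 : 3 ≤ (K' (i+2)).card := card_sdiff_c (hK _ hi) c
    obtain ⟨h1, h2, h3'⟩ := chain_spec K' c i h3
    rw [hK'] at h1; simp only [Finset.mem_sdiff, Finset.mem_singleton] at h1
    exact ⟨h1.1, h1.2, h2, h3'⟩
  set p2 : ℕ := pick (K (m+5) \ {g (m+3), c}) with hp2
  obtain ⟨p2K, p2a, p2b⟩ := pick2 (le_of_eq (hK (m+5) (by omega)).symm) (g (m+3)) c
  rw [← hp2] at p2K p2a p2b
  set p0 : ℕ := pick (K 0 \ {c, g 2, p2}) with hp0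
  obtain ⟨p0K, p0a, p0b, p0c⟩ := pick3 (le_of_eq (hK 0 (by omega)).symm) c (g 2) p2
  rw [← hp0] at p0K p0a p0b p0c
  refine ⟨fun i => if i = 0 then p0 else if i = 1 then c else if i = m+4 then c
      else if i = m+5 then p2 else g i, ?_, ?_, ?_, ?_, ?_, ?_⟩
  · intro i hi
    simp only []
    split_ifs with h1 h2 h3 h4
    · subst h1; exact p0K
    · subst h2; exact hc1
    · subst h3; exact hc4
    · subst h4; exact p2K
    · obtain ⟨j, rfl⟩ : ∃ j, i = j + 2 := ⟨i - 2, by omega⟩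
      exact (gspec j (by omega)).1
  · intro i hi
    have hcase : i = 0 ∨ i = 1 ∨ i = m+3 ∨ i = m+4 ∨ (2 ≤ i ∧ i ≤ m+2) := by omega
    rcases hcase with rfl | rfl | rfl | rfl | ⟨h2, h3⟩
    · simpa using p0a
    · have := (gspec 0 (by omega)).2.1
      simpa [show (2:ℕ) ≠ m+4 by omega, show (2:ℕ) ≠ m+5 by omega] using this.symm
    · have := (gspec (m+1) (by omega)).2.1
      simpa [show m+3 ≠ 0 by omega, show m+3 ≠ 1 by omega, show m+3 ≠ m+4 by omega,
        show m+3 ≠ m+5 by omega, show m+3+1 = m+4 from rfl] using this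
    · simpa [show m+4 ≠ 0 by omega, show m+4 ≠ 1 by omega, show m+4 ≠ m+5 by omega,
        show m+4+1 = m+5 from rfl] using p2b.symm
    · obtain ⟨j, rfl⟩ : ∃ j, i = j + 2 := ⟨i - 2, by omega⟩
      have := (gspec (j+1) (by omega)).2.2.1
      simpa [show j+2 ≠ 0 by omega, show j+2 ≠ 1 by omega, show j+2 ≠ m+4 by omega,
        show j+2 ≠ m+5 by omega, show j+2+1 ≠ m+4 by omega, show j+2+1 ≠ m+5 by omega,
        show j+2+1 ≠ 0 by omega, show j+2+1 ≠ 1 by omega, show j ≠ m+1 by omega,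
        show j ≠ m+2 by omega, show j ≠ m+3 by omega] using this.symm
  · intro i hi
    have hcase : i = 0 ∨ i = 1 ∨ i = m+2 ∨ i = m+3 ∨ (2 ≤ i ∧ i ≤ m+1) := by omega
    rcases hcase with rfl | rfl | rfl | rfl | ⟨h2, h3⟩
    · simpa [show (2:ℕ) ≠ m+4 by omega, show (2:ℕ) ≠ m+5 by omega] using p0b
    · have := (gspec 1 (by omega)).2.1
      simpa [show (3:ℕ) ≠ m+4 by omega, show (3:ℕ) ≠ m+5 by omega] using this.symm
    · have := (gspec m (by omega)).2.1
      simpa [show m+2 ≠ 0 by omega, show m+2 ≠ 1 by omega, show m+2 ≠ m+4 by omega,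
        show m+2 ≠ m+5 by omega, show m+2+2 = m+4 from rfl] using this
    · have := p2a
      simpa [show m+3 ≠ 0 by omega, show m+3 ≠ 1 by omega, show m+3 ≠ m+4 by omega,
        show m+3 ≠ m+5 by omega, show m+3+2 = m+5 from rfl] using this.symm
    · obtain ⟨j, rfl⟩ : ∃ j, i = j + 2 := ⟨i - 2, by omega⟩
      have := (gspec (j+2) (by omega)).2.2.2
      simpa [show j+2 ≠ 0 by omega, show j+2 ≠ 1 by omega, show j+2 ≠ m+4 by omega,
        show j+2 ≠ m+5 by omega, show j+2+2 ≠ m+4 by omega, show j+2+2 ≠ m+5 by omega,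
        show j+2+2 ≠ 0 by omega, show j+2+2 ≠ 1 by omega, show j ≠ m by omega,
        show j ≠ m+1 by omega, show j ≠ m+2 by omega, show j ≠ m+3 by omega] using this.symm
  · rw [show m+6-1 = m+5 by omega]
    simpa [show m+5 ≠ 0 by omega, show m+5 ≠ 1 by omega, show m+5 ≠ m+4 by omega] using p0c
  · rw [show m+6-2 = m+4 by omega]
    simpa [show m+4 ≠ 0 by omega, show m+4 ≠ 1 by omega] using p0a
  · rw [show m+6-1 = m+5 by omega]
    simpa [show m+5 ≠ 0 by omega, show m+5 ≠ 1 by omega, show m+5 ≠ m+4 by omega]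
      using p2b.symm

end PCFaux

namespace PCFaux

lemma small (n : ℕ) (hn : n = 3 ∨ n = 4) (K : ℕ → Finset ℕ)
    (hK : ∀ i < n, (K i).card = 4) : Concl n K := by
  have h0 : 4 ≤ (K 0).card := le_of_eq (hK 0 (by omega)).symm
  have h1 : 4 ≤ (K 1).card := le_of_eq (hK 1 (by omega)).symm
  have h2 : 4 ≤ (K 2).card := le_of_eq (hK 2 (by omega)).symm
  set a0 : ℕ := pick (K 0) with ha0
  have a0K : a0 ∈ K 0 := pick_mem (Finset.card_pos.1 (by omega))
  set a1 : ℕ := pick (K 1 \ {a0, a0, a0}) with ha1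
  obtain ⟨a1K, a1a, -, -⟩ := pick3 h1 a0 a0 a0
  rw [← ha1] at a1K a1a
  set a2 : ℕ := pick (K 2 \ {a0, a1, a1}) with ha2
  obtain ⟨a2K, a2a, a2b, -⟩ := pick3 h2 a0 a1 a1
  rw [← ha2] at a2K a2a a2b
  set a3 : ℕ := pick (K 3 \ {a0, a1, a2}) with ha3
  have a3spec := fun (h : 4 ≤ (K 3).card) => pick3 h a0 a1 a2
  refine ⟨fun i => match i with | 0 => a0 | 1 => a1 | 2 => a2 | _ => a3, ?_, ?_, ?_, ?_, ?_, ?_⟩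
  all_goals rcases hn with rfl | rfl
  · intro i hi
    match i, hi with
    | 0, _ => exact a0K
    | 1, _ => exact a1K
    | 2, _ => exact a2K
  · intro i hi
    have h3 : 4 ≤ (K 3).card := le_of_eq (hK 3 (by omega)).symm
    obtain ⟨a3K, -, -, -⟩ := a3spec h3
    rw [← ha3] at a3K
    match i, hi with
    | 0, _ => exact a0K
    | 1, _ => exact a1K
    | 2, _ => exact a2K
    | 3, _ => exact a3K
  · intro i hi
    match i, hi with
    | 0, _ => exact a1a.symm
    | 1, _ => exact a2b.symm
  · intro i hi
    have h3 : 4 ≤ (K 3).card := le_of_eq (hK 3 (by omega)).symm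
    obtain ⟨-, -, -, a3c⟩ := a3spec h3
    rw [← ha3] at a3c
    match i, hi with
    | 0, _ => exact a1a.symm
    | 1, _ => exact a2b.symm
    | 2, _ => exact a3c.symm
  · intro i hi
    match i, hi with
    | 0, _ => exact a2a.symm
  · intro i hi
    have h3 : 4 ≤ (K 3).card := le_of_eq (hK 3 (by omega)).symm
    obtain ⟨-, -, a3b, -⟩ := a3spec h3
    rw [← ha3] at a3b
    match i, hi with
    | 0, _ => exact a2a.symm
    | 1, _ => exact a3b.symm
  · exact a2a.symm
  · have h3 : 4 ≤ (K 3).card := le_of_eq (hK 3 (by omega)).symm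
    obtain ⟨-, a3a, -, -⟩ := a3spec h3
    rw [← ha3] at a3a
    exact a3a.symm
  · exact a1a.symm
  · exact a2a.symm
  · exact a2b.symm
  · have h3 : 4 ≤ (K 3).card := le_of_eq (hK 3 (by omega)).symm
    obtain ⟨-, -, a3b, -⟩ := a3spec h3
    rw [← ha3] at a3b
    exact a3b.symm

end PCFaux

namespace PCFaux

lemma cyc (n : ℕ) (hn : 3 ≤ n) (h5 : n ≠ 5) (K : ℕ → Finset ℕ)
    (hK : ∀ i < n, (K i).card = 4) : Concl n K := by
  rcases Nat.lt_or_ge n 6 with h6 | h6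
  · exact small n (by omega) K hK
  obtain ⟨m, rfl⟩ : ∃ m, n = m + 6 := ⟨n - 6, by omega⟩
  by_cases hA : (K 1 ∩ K (m+4)).Nonempty
  · obtain ⟨c, hc⟩ := hA
    rw [Finset.mem_inter] at hc
    exact patternA m K hK c hc.1 hc.2
  by_cases hB : (K 1 \ K 0).Nonempty
  · obtain ⟨c, hc⟩ := hB
    rw [Finset.mem_sdiff] at hc
    exact patternB m K hK c hc.1 hc.2
  -- remaining: K (m+4) \ K 0 nonempty; use reflected pattern D
  have hC : (K (m+4) \ K 0).Nonempty := by
    by_contra hC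
    rw [Finset.not_nonempty_iff_eq_empty, Finset.sdiff_eq_empty_iff_subset] at hB hC
    have e1 : K 1 = K 0 := Finset.eq_of_subset_of_card_le hB (by rw [hK 0 (by omega), hK 1 (by omega)])
    have e2 : K (m+4) = K 0 := Finset.eq_of_subset_of_card_le hC (by rw [hK 0 (by omega), hK (m+4) (by omega)])
    apply hA
    rw [e1, e2, Finset.inter_self, ← Finset.card_pos, hK 0 (by omega)]
    omega
  obtain ⟨c, hc⟩ := hC
  rw [Finset.mem_sdiff] at hc
  set σ : ℕ → ℕ := fun i => if i = 0 then 0 else m + 6 - i with hσ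
  have hσlt : ∀ i < m+6, σ i < m+6 := by intro i hi; simp only [hσ]; split_ifs <;> omega
  have hσσ : ∀ i < m+6, σ (σ i) = i := by
    intro i hi; simp only [hσ]; split_ifs with h1 h2 <;> omega
  set M : ℕ → Finset ℕ := fun i => K (σ i) with hM
  have hMK : ∀ i < m+6, (M i).card = 4 := fun i hi => hK (σ i) (hσlt i hi)
  have hM2 : M 2 = K (m+4) := by simp [hM, hσ]
  have hM0 : M 0 = K 0 := by simp [hM, hσ]
  obtain ⟨ψ, ψmem, ψcons, ψdist, ψb1, ψb2, ψb3⟩ :=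
    patternD m M hMK c (by rw [hM2]; exact hc.1) (by rw [hM0]; exact hc.2)
  rw [show m+6-1 = m+5 by omega] at ψb1 ψb3
  rw [show m+6-2 = m+4 by omega] at ψb2
  refine ⟨fun i => ψ (σ i), ?_, ?_, ?_, ?_, ?_, ?_⟩
  · intro i hi
    show ψ (σ i) ∈ K i
    have h := ψmem (σ i) (hσlt i hi)
    change ψ (σ i) ∈ K (σ (σ i)) at h
    rwa [hσσ i hi] at h
  · intro i hi
    show ψ (σ i) ≠ ψ (σ (i+1))
    rcases Nat.eq_zero_or_pos i with rfl | hpos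
    · have e0 : σ 0 = 0 := by simp [hσ]
      have e1 : σ 1 = m + 5 := by simp [hσ]
      rw [e0, e1]; exact ψb1
    · have e1 : σ i = m + 6 - i := by
        show (if i = 0 then 0 else m+6-i) = m+6-i
        rw [if_neg (by omega : ¬ i = 0)]
      have e2 : σ (i+1) = m + 5 - i := by
        show (if i+1 = 0 then 0 else m+6-(i+1)) = m+5-i
        rw [if_neg (by omega : ¬ i+1 = 0)]; omega
      rw [e1, e2]
      have := ψcons (m + 5 - i) (by omega)
      rw [show m + 5 - i + 1 = m + 6 - i by omega] at this
      exact this.symm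
  · intro i hi
    show ψ (σ i) ≠ ψ (σ (i+2))
    rcases Nat.lt_or_ge i 2 with h2 | h2
    · interval_cases i
      · have e0 : σ 0 = 0 := by simp [hσ]
        have e2 : σ 2 = m + 4 := by simp [hσ]
        rw [e0, e2]; exact ψb2
      · have e1 : σ 1 = m + 5 := by simp [hσ]
        have e3 : σ 3 = m + 3 := by simp [hσ]
        rw [e1, e3]
        have := ψdist (m+3) (by omega)
        rw [show m + 3 + 2 = m + 5 by omega] at this
        exact this.symm
    · have e1 : σ i = m + 6 - i := by
        show (if i = 0 then 0 else m+6-i) = m+6-i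
        rw [if_neg (by omega : ¬ i = 0)]
      have e2 : σ (i+2) = m + 4 - i := by
        show (if i+2 = 0 then 0 else m+6-(i+2)) = m+4-i
        rw [if_neg (by omega : ¬ i+2 = 0)]; omega
      rw [e1, e2]
      have := ψdist (m + 4 - i) (by omega)
      rw [show m + 4 - i + 2 = m + 6 - i by omega] at this
      exact this.symm
  · show ψ (σ 0) ≠ ψ (σ (m+6-1))
    rw [show m+6-1 = m+5 by omega, show σ 0 = 0 by simp [hσ],
      show σ (m+5) = 1 by simp [hσ]]
    exact ψcons 0 (by omega)
  · show ψ (σ 0) ≠ ψ (σ (m+6-2))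
    rw [show m+6-2 = m+4 by omega, show σ 0 = 0 by simp [hσ],
      show σ (m+4) = 2 by simp [hσ]]
    exact ψdist 0 (by omega)
  · show ψ (σ 1) ≠ ψ (σ (m+6-1))
    rw [show m+6-1 = m+5 by omega, show σ 1 = m+5 by simp [hσ], show σ (m+5) = 1 by simp [hσ]]
    exact ψb3.symm

end PCFaux

namespace PCFaux

variable {V : Type*} (G : SimpleGraph V)

/-- the neighbour of `v` other than `u` -/
noncomputable def nextv [Fintype V] [DecidableEq V] [DecidableRel G.Adj] (u v : V) : V :=
  ((G.neighborFinset v).erase u).toList.head?.getD v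

lemma nextv_spec [Fintype V] [DecidableEq V] [DecidableRel G.Adj]
    {u v : V} (hdeg : G.degree v = 2) (h : G.Adj v u) :
    G.Adj v (nextv G u v) ∧ nextv G u v ≠ u := by
  have hu : u ∈ G.neighborFinset v := by rwa [SimpleGraph.mem_neighborFinset]
  have hcard : ((G.neighborFinset v).erase u).card = 1 := by
    rw [Finset.card_erase_of_mem hu]
    rw [SimpleGraph.card_neighborFinset_eq_degree] at *
    omega
  have hne : ((G.neighborFinset v).erase u).toList ≠ [] := by
    rw [← Finset.length_toList] at hcard
    intro h'; rw [h'] at hcard; simp at hcard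
  obtain ⟨a, t, ht⟩ := List.exists_cons_of_ne_nil hne
  have ha : nextv G u v = a := by rw [nextv, ht]; rfl
  have : a ∈ ((G.neighborFinset v).erase u).toList := by rw [ht]; exact List.mem_cons_self
  rw [Finset.mem_toList, Finset.mem_erase, SimpleGraph.mem_neighborFinset] at this
  rw [ha]
  exact ⟨this.2, this.1⟩

noncomputable def walkF [Fintype V] [DecidableEq V] [DecidableRel G.Adj] (v₀ u₀ : V) : ℕ → V
  | 0 => v₀
  | 1 => u₀
  | (k+2) => nextv G (walkF v₀ u₀ k) (walkF v₀ u₀ (k+1))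

section walk

variable [Fintype V] [DecidableEq V] [DecidableRel G.Adj] {v₀ u₀ : V}
  (hreg : ∀ v : V, G.degree v = 2) (h01 : G.Adj v₀ u₀)

include hreg h01

local notation "w" => walkF G v₀ u₀

lemma walk_adj : ∀ k, G.Adj (w k) (w (k+1)) := by
  intro k
  induction k with
  | zero => exact h01
  | succ k ih =>
    have := nextv_spec G (hreg (w (k+1))) ih.symm
    exact this.1

lemma walk_ne2 : ∀ k, w (k+2) ≠ w k := by
  intro k
  have := nextv_spec G (hreg (w (k+1))) (walk_adj G hreg h01 k).symm
  exact this.2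

lemma walk_nbhd : ∀ k, G.neighborFinset (w (k+1)) = {w k, w (k+2)} := by
  intro k
  have hsub : ({w k, w (k+2)} : Finset V) ⊆ G.neighborFinset (w (k+1)) := by
    intro x hx
    rw [Finset.mem_insert, Finset.mem_singleton] at hx
    rw [SimpleGraph.mem_neighborFinset]
    rcases hx with rfl | rfl
    · exact (walk_adj G hreg h01 k).symm
    · exact (nextv_spec G (hreg (w (k+1))) (walk_adj G hreg h01 k).symm).1
  have hcard : ({w k, w (k+2)} : Finset V).card = 2 := by
    rw [Finset.card_insert_of_notMem (by simp [(walk_ne2 G hreg h01 k).symm]), Finset.card_singleton]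
  symm
  apply Finset.eq_of_subset_of_card_le hsub
  rw [hcard, SimpleGraph.card_neighborFinset_eq_degree, hreg]

lemma walk_adj_cases : ∀ k x, G.Adj (w (k+1)) x → x = w k ∨ x = w (k+2) := by
  intro k x hx
  have := walk_nbhd G hreg h01 k
  rw [← SimpleGraph.mem_neighborFinset, this, Finset.mem_insert, Finset.mem_singleton] at hx
  exact hx

lemma walk_main (hconn : G.Connected) :
    (∀ a b, a < Fintype.card V → b < Fintype.card V → w a = w b → a = b) ∧
    (∀ k, w (k + Fintype.card V) = w k) ∧ (∀ x : V, ∃ k, k < Fintype.card V ∧ w k = x) := by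
  classical
  set n := Fintype.card V with hn
  -- a repeat exists
  have hrep : ∃ l, 0 < l ∧ ∃ j, j < l ∧ w j = w l := by
    have hcard : Fintype.card V < Fintype.card (Fin (n+1)) := by simp [hn]
    obtain ⟨x, y, hxy, he⟩ := Fintype.exists_ne_map_eq_of_card_lt (fun i : Fin (n+1) => w i) hcard
    rcases lt_or_gt_of_ne (fun h => hxy (Fin.ext h)) with h | h
    · exact ⟨y, by omega, x, h, he⟩
    · exact ⟨x, by omega, y, h, he.symm⟩
  set l := Nat.find hrep with hl
  obtain ⟨hlpos, j, hjl, hwj⟩ := Nat.find_spec hrep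
  rw [← hl] at hlpos hjl hwj
  have hinj : ∀ a b, a < l → b < l → w a = w b → a = b := by
    intro a b ha hb he
    by_contra hne
    rcases lt_or_gt_of_ne hne with h | h
    · exact Nat.find_min hrep hb ⟨by omega, a, h, he⟩
    · exact Nat.find_min hrep ha ⟨by omega, b, h, he.symm⟩
  -- the repeat closes at 0
  have hj0 : j = 0 := by
    by_contra hj0
    have hj1 : 1 ≤ j := by omega
    have hlj1 : l ≠ j + 1 := by
      intro h; rw [h] at hwj; exact (walk_adj G hreg h01 j).ne hwj
    have hadj : G.Adj (w j) (w (l-1)) := by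
      have := walk_adj G hreg h01 (l-1)
      rw [show l-1+1 = l by omega] at this
      rw [hwj]
      exact this.symm
    have hcases := walk_adj_cases G hreg h01 (j-1) (w (l-1))
    rw [show j-1+1 = j by omega, show j-1+2 = j+1 by omega] at hcases
    rcases hcases hadj with h | h
    · have := hinj (l-1) (j-1) (by omega) (by omega) h
      omega
    · rcases Nat.lt_or_ge (j+1) (l-1) with h2 | h2
      · have := hinj (l-1) (j+1) (by omega) (by omega) h
        omega
      · have hl2 : l = j + 2 := by omega
        rw [hl2] at hwj
        exact walk_ne2 G hreg h01 j hwj.symm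
  rw [hj0] at hwj
  have hl3 : 3 ≤ l := by
    rcases Nat.lt_or_ge l 3 with h | h
    · interval_cases l
      · exact absurd hwj (walk_adj G hreg h01 0).ne
      · exact absurd hwj.symm (walk_ne2 G hreg h01 0)
    · exact h
  -- the image of the walk is closed under adjacency
  set S0 : Finset V := (Finset.range l).image w with hS0
  have hmemS0 : ∀ k, k < l → w k ∈ S0 := by
    intro k hk
    rw [hS0, Finset.mem_image]
    exact ⟨k, Finset.mem_range.2 hk, rfl⟩
  have hw0 : w 0 ∈ S0 := hmemS0 0 (by omega)
  have hclosed : ∀ x ∈ S0, ∀ y, G.Adj x y → y ∈ S0 := by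
    intro x hx y hxy
    rw [hS0, Finset.mem_image] at hx
    obtain ⟨k, hk, rfl⟩ := hx
    rw [Finset.mem_range] at hk
    rcases Nat.eq_zero_or_pos k with rfl | hk1
    · -- neighbourhood of w 0
      have hadj1 : G.Adj (w 0) (w (l-1)) := by
        have := walk_adj G hreg h01 (l-1)
        rw [show l-1+1 = l by omega] at this
        rw [hwj]; exact this.symm
      have hne1 : w 1 ≠ w (l-1) := fun h => by
        have := hinj 1 (l-1) (by omega) (by omega) h; omega
      have hnb : G.neighborFinset (w 0) = {w 1, w (l-1)} := by
        symm
        apply Finset.eq_of_subset_of_card_le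
        · intro z hz
          rw [Finset.mem_insert, Finset.mem_singleton] at hz
          rw [SimpleGraph.mem_neighborFinset]
          rcases hz with rfl | rfl
          · exact walk_adj G hreg h01 0
          · exact hadj1
        · rw [Finset.card_insert_of_notMem (by simpa using hne1), Finset.card_singleton,
            SimpleGraph.card_neighborFinset_eq_degree, hreg]
      have : y ∈ G.neighborFinset (w 0) := by rwa [SimpleGraph.mem_neighborFinset]
      rw [hnb, Finset.mem_insert, Finset.mem_singleton] at this
      rcases this with rfl | rfl
      · exact hmemS0 1 (by omega)
      · exact hmemS0 (l-1) (by omega)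
    · obtain ⟨k', rfl⟩ : ∃ k', k = k' + 1 := ⟨k - 1, by omega⟩
      rcases walk_adj_cases G hreg h01 k' y hxy with rfl | rfl
      · exact hmemS0 k' (by omega)
      · rcases Nat.lt_or_ge (k'+2) l with h2 | h2
        · exact hmemS0 (k'+2) h2
        · have : k' + 2 = l := by omega
          rw [this, ← hwj]
          exact hw0
  have hstep : ∀ (a b : V) (p : G.Walk a b), a ∈ S0 → b ∈ S0 := by
    intro a b p
    induction p with
    | nil => exact id
    | cons hab p ih => exact fun ha => ih (hclosed _ ha _ hab)
  have hall : ∀ x : V, x ∈ S0 := by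
    intro x
    obtain ⟨p⟩ := hconn.preconnected (w 0) x
    exact hstep _ _ p hw0
  -- l = n
  have hln : l = n := by
    have hcardS0 : S0.card = l := by
      rw [hS0, Finset.card_image_of_injOn, Finset.card_range]
      intro a ha b hb he
      rw [Finset.mem_coe, Finset.mem_range] at ha hb
      exact hinj a b ha hb he
    have : S0 = Finset.univ := Finset.eq_univ_of_forall hall
    rw [this, Finset.card_univ] at hcardS0
    omega
  rw [hln] at hinj hwj
  -- periodicity
  have hnb0 : G.neighborFinset (w 0) = {w 1, w (n-1)} := by
    have hadj1 : G.Adj (w 0) (w (n-1)) := by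
      have := walk_adj G hreg h01 (n-1)
      rw [show n-1+1 = n by omega, ← hwj] at this
      exact this.symm
    have hne1 : w 1 ≠ w (n-1) := fun h => by
      have := hinj 1 (n-1) (by omega) (by omega) h; omega
    symm
    apply Finset.eq_of_subset_of_card_le
    · intro z hz
      rw [Finset.mem_insert, Finset.mem_singleton] at hz
      rw [SimpleGraph.mem_neighborFinset]
      rcases hz with rfl | rfl
      · exact walk_adj G hreg h01 0
      · exact hadj1
    · rw [Finset.card_insert_of_notMem (by simpa using hne1), Finset.card_singleton,
        SimpleGraph.card_neighborFinset_eq_degree, hreg]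
  have p0 : w n = w 0 := hwj.symm
  have p1 : w (n+1) = w 1 := by
    have hadj : G.Adj (w 0) (w (n+1)) := by
      have := walk_adj G hreg h01 n
      rwa [p0] at this
    have hmem : w (n+1) ∈ G.neighborFinset (w 0) := by
      rwa [SimpleGraph.mem_neighborFinset]
    rw [hnb0, Finset.mem_insert, Finset.mem_singleton] at hmem
    rcases hmem with h | h
    · exact h
    · exfalso
      have hne := walk_ne2 G hreg h01 (n-1)
      rw [show n-1+2 = n+1 by omega] at hne
      exact hne h
  have hper : ∀ k, w (k + n) = w k := by
    intro k
    induction k using Nat.strong_induction_on with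
    | _ k ih =>
      match k with
      | 0 => rw [Nat.zero_add]; exact p0
      | 1 => rw [Nat.add_comm]; exact p1
      | (k+2) =>
        have e : k+2+n = (k+n)+2 := by omega
        rw [e]
        show nextv G (w (k+n)) (w (k+n+1)) = nextv G (w k) (w (k+1))
        rw [ih k (by omega), show k+n+1 = (k+1)+n by omega, ih (k+1) (by omega)]
  refine ⟨hinj, hper, ?_⟩
  intro x
  have := hall x
  rw [hS0, Finset.mem_image] at this
  obtain ⟨k, hk, rfl⟩ := this
  rw [Finset.mem_range, hln] at hk
  exact ⟨k, hk, rfl⟩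

end walk

end PCFaux

theorem stmt12' {V : Type*} [Fintype V] (G : SimpleGraph V) [DecidableRel G.Adj]
    (hconn : G.Connected) (hcard : 2 ≤ Fintype.card V)
    (hreg : ∀ v : V, G.degree v = 2) (hC5 : Fintype.card V ≠ 5)
    (L : V → Finset ℕ) (hL : ∀ v, (L v).card = 4) :
    ∃ φ : V → ℕ, (∀ v, φ v ∈ L v) ∧
      ((∀ ⦃a b : V⦄, G.Adj a b → φ a ≠ φ b) ∧
       ∀ v : V, (∃ u, G.Adj v u) → ∃ c : ℕ, ∃! u : V, G.Adj v u ∧ φ u = c) := by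
  classical
  set n := Fintype.card V with hn
  obtain ⟨v₀⟩ : Nonempty V := Fintype.card_pos_iff.mp (by omega)
  obtain ⟨u₀, hu₀⟩ : (G.neighborFinset v₀).Nonempty := by
    rw [← Finset.card_pos, SimpleGraph.card_neighborFinset_eq_degree, hreg]; omega
  have h01 : G.Adj v₀ u₀ := (SimpleGraph.mem_neighborFinset _ _ _).1 hu₀
  obtain ⟨hinj, hper, hsurj⟩ := PCFaux.walk_main G hreg h01 hconn
  rw [← hn] at hinj hper hsurj
  set w : ℕ → V := PCFaux.walkF G v₀ u₀ with hw
  have hn3 : 3 ≤ n := by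
    have hnm : v₀ ∉ G.neighborFinset v₀ := by
      simp [SimpleGraph.mem_neighborFinset]
    have h3 : (insert v₀ (G.neighborFinset v₀)).card = 3 := by
      rw [Finset.card_insert_of_notMem hnm, SimpleGraph.card_neighborFinset_eq_degree, hreg]
    have := Finset.card_le_univ (insert v₀ (G.neighborFinset v₀))
    rw [h3] at this
    omega
  have hnpos : 0 < n := by omega
  have hmod : ∀ a, w a = w (a % n) := by
    intro a
    induction a using Nat.strong_induction_on with
    | _ a ih =>
      rcases Nat.lt_or_ge a n with h | h
      · rw [Nat.mod_eq_of_lt h]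
      · obtain ⟨b, rfl⟩ : ∃ b, a = b + n := ⟨a - n, by omega⟩
        rw [hper b, ih b (by omega), Nat.add_mod_right]
  set K : ℕ → Finset ℕ := fun k => L (w k) with hK
  obtain ⟨ψ, ψmem, ψcons, ψdist, ψb1, ψb2, ψb3⟩ :=
    PCFaux.cyc n hn3 hC5 K (fun i _ => hL (w i))
  have ψadj : ∀ j k, j < n → k < n → k = (j+1) % n → ψ j ≠ ψ k := by
    intro j k hj hk he
    rcases Nat.lt_or_ge (j+1) n with h | h
    · rw [Nat.mod_eq_of_lt h] at he
      subst he; exact ψcons j h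
    · have hj1 : j + 1 = n := by omega
      rw [hj1, Nat.mod_self] at he
      subst he
      have : j = n - 1 := by omega
      rw [this]
      exact ψb1.symm
  have ψd2 : ∀ j k, j < n → k < n → k = (j+2) % n → ψ j ≠ ψ k := by
    intro j k hj hk he
    rcases Nat.lt_or_ge (j+2) n with h | h
    · rw [Nat.mod_eq_of_lt h] at he
      subst he; exact ψdist j h
    · rcases Nat.eq_or_lt_of_le h with h2 | h2
      · rw [← h2, Nat.mod_self] at he
        subst he
        have : j = n - 2 := by omega
        rw [this]
        exact ψb2.symm
      · have hj1 : j = n - 1 := by omega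
        have : j + 2 = 1 + n := by omega
        rw [this, Nat.add_mod_right, Nat.mod_eq_of_lt (by omega)] at he
        subst he
        rw [hj1]
        exact ψb3.symm
  choose E hEn hEw using hsurj
  have hadjidx : ∀ a b : V, G.Adj a b → E b = (E a + 1) % n ∨ E a = (E b + 1) % n := by
    intro a b hab
    have hcases := PCFaux.walk_adj_cases G hreg h01 (E a + n - 1) b
    rw [← hw] at hcases
    rw [show E a + n - 1 + 1 = E a + n by omega, show E a + n - 1 + 2 = E a + n + 1 by omega,
      hper (E a)] at hcases
    rw [← hEw a] at hab
    rcases hcases hab with rfl | rfl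
    · right
      have e1 : w (E a + n - 1) = w ((E a + n - 1) % n) := hmod _
      have e2 : E (w (E a + n - 1)) = (E a + n - 1) % n := by
        apply hinj _ _ (hEn _) (Nat.mod_lt _ hnpos)
        rw [hEw, e1]
      rw [e2]
      have : ((E a + n - 1) % n + 1) % n = (E a + n) % n := by
        rw [Nat.mod_add_mod, show E a + n - 1 + 1 = E a + n by omega]
      rw [this, Nat.add_mod_right, Nat.mod_eq_of_lt (hEn a)]
    · left
      have e2 : E (w (E a + n + 1)) = (E a + n + 1) % n := by
        apply hinj _ _ (hEn _) (Nat.mod_lt _ hnpos)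
        rw [hEw, hmod]
      rw [e2, show E a + n + 1 = (E a + 1) + n by omega, Nat.add_mod_right]
  refine ⟨fun v => ψ (E v), ?_, ?_, ?_⟩
  · intro v
    have := ψmem (E v) (hEn v)
    rw [hK] at this
    simp only at this
    rwa [hEw v] at this
  · intro a b hab
    rcases hadjidx a b hab with h | h
    · exact ψadj (E a) (E b) (hEn a) (hEn b) h
    · exact (ψadj (E b) (E a) (hEn b) (hEn a) h).symm
  · intro v hv
    set j := E v with hj
    set u1 := w ((j+1) % n) with hu1
    have hEu1 : E u1 = (j+1) % n := by
      apply hinj _ _ (hEn _) (Nat.mod_lt _ hnpos)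
      rw [hEw]
    have hadj1 : G.Adj v u1 := by
      have := PCFaux.walk_adj G hreg h01 j
      rw [← hw] at this
      rw [hEw v] at this
      rwa [hu1, ← hmod]
    refine ⟨ψ ((j+1) % n), u1, ⟨hadj1, by show ψ (E u1) = ψ ((j+1) % n); rw [hEu1]⟩, ?_⟩
    rintro u ⟨hadju, hψu⟩
    rcases hadjidx v u hadju with h | h
    · rw [← hEw u, ← hEw u1, hEu1, h]
    · exfalso
      have hne := ψd2 (E u) ((j+1) % n) (hEn u) (Nat.mod_lt _ hnpos) ?_
      · exact hne hψu
      · rw [← hj] at h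
        rw [h, Nat.mod_add_mod, show E u + 1 + 1 = E u + 2 by omega]

theorem stmt12 {V : Type*} [Fintype V] (G : SimpleGraph V) [DecidableRel G.Adj]
    (hconn : G.Connected) (hcard : 2 ≤ Fintype.card V)
    (hreg : ∀ v : V, G.degree v = 2) (hC5 : Fintype.card V ≠ 5)
    (L : V → Finset ℕ) (hL : ∀ v, (L v).card = 4) :
    ∃ φ : V → ℕ, (∀ v, φ v ∈ L v) ∧ IsPCF G φ := by
  exact stmt12' G hconn hcard hreg hC5 L hL
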